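/- Let K be a separable Banach space with Borel σ-algebra, let κ be a Markov kernel from K to K, and let μ be a probability measure on K invariant under κ, i.e., the measure μ.bind κ equals μ. Assume there exist a ≥ 0 and b ∈ [0, 1) such that ∫_K ‖z‖ κ(v, dz) ≤ a + b ‖v‖ for every v ∈ K, and that ∫_K ‖z‖ μ(dz) < ∞. Then ∫_K ‖z‖ μ(dz) ≤ a/(1 − b). -/

import Mathlib

open MeasureTheory ProbabilityTheory
open scoped ENNReal NNReal

theorem invariant_measure_first_moment_bound
    {K : Type*} [NormedAddCommGroup K] [NormedSpace ℝ K] [CompleteSpace K]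
    [TopologicalSpace.SeparableSpace K] [MeasurableSpace K] [BorelSpace K]
    (κ : Kernel K K) [IsMarkovKernel κ]
    (μ : Measure K) [IsProbabilityMeasure μ]
    (hinv : μ.bind (fun v => κ v) = μ)
    (a b : ℝ) (ha : 0 ≤ a) (hb : b ∈ Set.Ico (0:ℝ) 1)
    (hmom : ∀ v : K, ∫⁻ z, (‖z‖₊ : ℝ≥0∞) ∂(κ v) ≤ ENNReal.ofReal (a + b * ‖v‖))
    (hfin : ∫⁻ z, (‖z‖₊ : ℝ≥0∞) ∂μ < ⊤) :
    ∫⁻ z, (‖z‖₊ : ℝ≥0∞) ∂μ ≤ ENNReal.ofReal (a / (1 - b)) := by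
  obtain ⟨hb0, hb1⟩ := hb
  set M : ℝ≥0∞ := ∫⁻ z, (‖z‖₊ : ℝ≥0∞) ∂μ with hM
  have hmeas : Measurable fun z : K => (‖z‖₊ : ℝ≥0∞) := measurable_nnnorm.coe_nnreal_ennreal
  have key : M ≤ ENNReal.ofReal a + ENNReal.ofReal b * M := by
    have h1 : M = ∫⁻ v, ∫⁻ z, (‖z‖₊ : ℝ≥0∞) ∂(κ v) ∂μ := by
      conv_lhs => rw [hM, ← hinv]
      exact Measure.lintegral_bind κ.measurable.aemeasurable hmeas.aemeasurable
    calc M = ∫⁻ v, ∫⁻ z, (‖z‖₊ : ℝ≥0∞) ∂(κ v) ∂μ := h1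
      _ ≤ ∫⁻ v, ENNReal.ofReal (a + b * ‖v‖) ∂μ := lintegral_mono hmom
      _ ≤ ∫⁻ v, (ENNReal.ofReal a + ENNReal.ofReal b * (‖v‖₊ : ℝ≥0∞)) ∂μ := by
          refine lintegral_mono fun v => ?_
          rw [ENNReal.ofReal_add ha (mul_nonneg hb0 (norm_nonneg v)),
            ENNReal.ofReal_mul hb0, ofReal_norm, enorm_eq_nnnorm]
      _ = ENNReal.ofReal a + ENNReal.ofReal b * M := by
          rw [lintegral_add_left measurable_const, lintegral_const,
            lintegral_const_mul _ hmeas, measure_univ, mul_one, ← hM]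
  have hBlt : ENNReal.ofReal b < 1 := by
    rw [show (1 : ℝ≥0∞) = ENNReal.ofReal 1 by simp]
    exact (ENNReal.ofReal_lt_ofReal_iff one_pos).2 hb1
  have hsub : M - ENNReal.ofReal b * M ≤ ENNReal.ofReal a := tsub_le_iff_right.2 key
  have hfact : (1 - ENNReal.ofReal b) * M ≤ ENNReal.ofReal a := by
    rwa [ENNReal.sub_mul (fun _ _ => hfin.ne), one_mul]
  have h1b : (1 : ℝ≥0∞) - ENNReal.ofReal b = ENNReal.ofReal (1 - b) := by
    rw [← ENNReal.ofReal_one, ← ENNReal.ofReal_sub _ hb0]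
  have hpos : 0 < 1 - b := by linarith
  have hne0 : (1:ℝ≥0∞) - ENNReal.ofReal b ≠ 0 := by
    rw [h1b]; exact (ENNReal.ofReal_pos.2 hpos).ne'
  have hnetop : (1:ℝ≥0∞) - ENNReal.ofReal b ≠ ⊤ := by
    rw [h1b]; exact ENNReal.ofReal_ne_top
  have hfin2 : M ≤ ENNReal.ofReal a / (1 - ENNReal.ofReal b) :=
    (ENNReal.le_div_iff_mul_le (Or.inl hne0) (Or.inl hnetop)).2 (by rwa [mul_comm])
  rw [h1b] at hfin2
  rwa [ENNReal.ofReal_div_of_pos hpos]
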